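/- Let X be an infinite ultrahomogeneous linear order and K a complete linear order with least element ⊥ and greatest element ⊤, endowed with the order topology, containing X and such that every k ∈ K satisfies k = sup{x ∈ X : x ≤ k} and k = inf{x ∈ X : k ≤ x}. For each order-automorphism g of X define ĝ : K → K by ĝ(k) = sup{g(x) : x ∈ X, x ≤ k}. Then each ĝ is an order-automorphism and a homeomorphism of K extending g, and the closure of {Γ(ĝ) : g ∈ Aut(X)} in the hyperspace of nonempty closed subsets of K × K with the Vietoris topology equals the set of all nonempty closed A ⊆ K × K such that A is linearly ordered by the coordinatewise (product) order, A is connected, and pr₁(A) = pr₂(A) = K (i.e., A is a linearly ordered continuum with full projections). -/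

import Mathlib

set_option linter.unusedSectionVars false
set_option linter.unreachableTactic false
set_option linter.unusedTactic false
set_option maxHeartbeats 1000000

/-- The hyperspace of closed subsets of a topological space (including `∅`). -/
abbrev HClosed (Z : Type*) [TopologicalSpace Z] := {A : Set Z // IsClosed A}

/-- The Vietoris topology on the hyperspace of closed subsets: generated by the sets
`{A | A ∩ W ≠ ∅}` and `{A | A ⊆ W}` for `W` open. -/
def vietorisTop (Z : Type*) [TopologicalSpace Z] : TopologicalSpace (HClosed Z) :=
  TopologicalSpace.generateFrom
    ({s | ∃ W : Set Z, IsOpen W ∧ s = {A : HClosed Z | ((A : Set Z) ∩ W).Nonempty}} ∪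
     {s | ∃ W : Set Z, IsOpen W ∧ s = {A : HClosed Z | (A : Set Z) ⊆ W}})

/-- A linear order is ultrahomogeneous if any increasing finite tuple can be mapped onto any
other increasing tuple of the same length by an order-automorphism. -/
def UltrahomogeneousOrder (X : Type*) [LinearOrder X] : Prop :=
  ∀ (n : ℕ) (x y : Fin n → X), StrictMono x → StrictMono y →
    ∃ g : X ≃o X, ∀ i : Fin n, g (x i) = y i

open Set


section Prep
variable {X K : Type*} [LinearOrder X] [Infinite X]
  [CompleteLinearOrder K] [TopologicalSpace K] [OrderTopology K]

lemma strictMono_pair {a b : X} (h : a < b) : StrictMono ![a, b] := by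
  intro i j hij
  fin_cases i <;> fin_cases j <;> simp_all <;> omega

lemma X_dense (hX : UltrahomogeneousOrder X) {x y : X} (h : x < y) :
    ∃ z, x < z ∧ z < y := by
  obtain ⟨z, hz⟩ := Infinite.exists_notMem_finset ({x, y} : Finset X)
  simp only [Finset.mem_insert, Finset.mem_singleton, not_or] at hz
  rcases lt_trichotomy z x with hzx | rfl | hxz
  · obtain ⟨g, hg⟩ := hX 2 ![z, y] ![x, y] (strictMono_pair (hzx.trans h)) (strictMono_pair h)
    refine ⟨g x, ?_, ?_⟩
    · have := hg 0; simp at this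
      calc x = g z := this.symm
        _ < g x := g.strictMono hzx
    · have := hg 1; simp at this
      calc g x < g y := g.strictMono h
        _ = y := this
  · exact absurd rfl hz.1
  rcases lt_trichotomy z y with hzy | rfl | hyz
  · exact ⟨z, hxz, hzy⟩
  · exact absurd rfl hz.2
  · obtain ⟨g, hg⟩ := hX 2 ![x, z] ![x, y] (strictMono_pair hxz)
      (strictMono_pair h)
    refine ⟨g y, ?_, ?_⟩
    · have := hg 0; simp at this
      calc x = g x := this.symm
        _ < g y := g.strictMono h
    · have := hg 1; simp at this
      calc g y < g z := g.strictMono hyz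
        _ = y := this

variable (e : X ↪o K)
  (hdense : ∀ k : K, k = sSup ((fun x : X => e x) '' {x : X | e x ≤ k}) ∧
                     k = sInf ((fun x : X => e x) '' {x : X | k ≤ e x}))

include hdense in
lemma approx_le {k u : K} (h : u < k) : ∃ x : X, u < e x ∧ e x ≤ k := by
  by_contra hc
  push_neg at hc
  have hk := (hdense k).1
  have : k ≤ u := by
    conv_lhs => rw [hk]
    refine sSup_le ?_
    rintro _ ⟨x, hx, rfl⟩
    by_contra h'
    exact absurd hx (not_le.2 (hc x (not_le.1 h')))
  exact absurd this (not_le.2 h)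

include hdense in
lemma approx_ge {k v : K} (h : k < v) : ∃ x : X, k ≤ e x ∧ e x < v := by
  by_contra hc
  push_neg at hc
  have hk := (hdense k).2
  have : v ≤ k := by
    conv_rhs => rw [hk]
    refine le_sInf ?_
    rintro _ ⟨x, hx, rfl⟩
    by_contra h'
    exact absurd (hc x hx) (not_le.2 (not_le.1 h'))
  exact absurd this (not_le.2 h)

include hdense in
lemma K_dense (hX : UltrahomogeneousOrder X) {u v : K} (h : u < v) :
    ∃ k, u < k ∧ k < v := by
  obtain ⟨x, hux, hxv⟩ := approx_ge e hdense h
  rcases lt_or_eq_of_le hux with h' | h'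
  · exact ⟨e x, h', hxv⟩
  obtain ⟨y, huy, hyv⟩ := approx_le e hdense h
  rcases lt_or_eq_of_le hyv with h'' | h''
  · exact ⟨e y, huy, h''⟩
  have hxy : x < y := by
    rw [← e.lt_iff_lt]; rw [← h', h'']; exact h
  obtain ⟨z, h1, h2⟩ := X_dense hX hxy
  exact ⟨e z, h' ▸ e.strictMono h1, h'' ▸ e.strictMono h2⟩

include hdense in
lemma approx_mid (hX : UltrahomogeneousOrder X) {u v : K} (h : u < v) :
    ∃ x : X, u < e x ∧ e x < v := by
  obtain ⟨k, h1, h2⟩ := K_dense e hdense hX h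
  obtain ⟨x, hx1, hx2⟩ := approx_le e hdense h1
  exact ⟨x, hx1, lt_of_le_of_lt hx2 h2⟩

end Prep
section Hat
variable {X K : Type*} [LinearOrder X] [Infinite X]
  [CompleteLinearOrder K] [TopologicalSpace K] [OrderTopology K]
  (e : X ↪o K)
  (hdense : ∀ k : K, k = sSup ((fun x : X => e x) '' {x : X | e x ≤ k}) ∧
                     k = sInf ((fun x : X => e x) '' {x : X | k ≤ e x}))
  (hatf : (X ≃o X) → K → K)
  (hhat : ∀ (g : X ≃o X) (k : K),
      hatf g k = sSup ((fun x : X => e (g x)) '' {x : X | e x ≤ k}))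

include hhat in
lemma hat_mono (g : X ≃o X) : Monotone (hatf g) := by
  intro k k' hkk'
  rw [hhat, hhat]
  exact sSup_le_sSup (Set.image_mono (fun x hx => le_trans hx hkk'))

include hdense hhat in
lemma hat_e (g : X ≃o X) (x : X) : hatf g (e x) = e (g x) := by
  rw [hhat]
  apply le_antisymm
  · refine sSup_le ?_
    rintro _ ⟨x', hx', rfl⟩
    exact e.monotone (g.monotone (e.le_iff_le.1 hx'))
  · exact le_sSup ⟨x, le_refl _, rfl⟩

include hdense hhat in
lemma hat_le_rev (g : X ≃o X) {y : X} {k : K} (h : e y ≤ hatf g k) :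
    e (g.symm y) ≤ k := by
  by_contra hc
  push_neg at hc
  obtain ⟨z, hz1, hz2⟩ := approx_ge e hdense hc
  have hzy : g z < y := by
    have : z < g.symm y := e.lt_iff_lt.1 hz2
    have := g.strictMono this
    simpa using this
  have hsup : hatf g k ≤ e (g z) := by
    rw [hhat]
    refine sSup_le ?_
    rintro _ ⟨x', hx', rfl⟩
    exact e.monotone (g.monotone (e.le_iff_le.1 (le_trans hx' hz1)))
  exact absurd (le_trans h hsup) (not_le.2 (e.strictMono hzy))

include hdense hhat in
lemma hat_inv (g : X ≃o X) (k : K) : hatf g.symm (hatf g k) = k := by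
  apply le_antisymm
  · rw [hhat]
    refine sSup_le ?_
    rintro _ ⟨y, hy, rfl⟩
    exact hat_le_rev e hdense hatf hhat g hy
  · conv_lhs => rw [(hdense k).1]
    refine sSup_le ?_
    rintro _ ⟨x, hx, rfl⟩
    have h1 : e (g x) ≤ hatf g k := by
      rw [hhat]; exact le_sSup ⟨x, hx, rfl⟩
    have : e (g.symm (g x)) ≤ hatf g.symm (hatf g k) := by
      rw [hhat g.symm]
      exact le_sSup ⟨g x, h1, rfl⟩
    simpa using this

include hdense hhat in
lemma hat_orderIso (g : X ≃o X) : ∃ Gk : K ≃o K, ∀ k : K, Gk k = hatf g k := by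
  have hinv1 : ∀ k, hatf g.symm (hatf g k) = k := hat_inv e hdense hatf hhat g
  have hinv2 : ∀ k, hatf g (hatf g.symm k) = k := by
    intro k
    have := hat_inv e hdense hatf hhat g.symm k
    rwa [OrderIso.symm_symm] at this
  refine ⟨{ toFun := hatf g, invFun := hatf g.symm, left_inv := hinv1,
            right_inv := hinv2, map_rel_iff' := ?_ }, fun _ => rfl⟩
  intro a b
  constructor
  · intro h
    have h' : hatf g a ≤ hatf g b := h
    have := hat_mono e hatf hhat g.symm h'
    rwa [hinv1, hinv1] at this
  · exact fun h => hat_mono e hatf hhat g h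

end Hat
section Boxes
variable {K : Type*} [CompleteLinearOrder K] [TopologicalSpace K] [OrderTopology K]

lemma conv_nbhd {V : Set K} {k : K} (hV : IsOpen V) (hk : k ∈ V) :
    ∃ I : Set K, IsOpen I ∧ I.OrdConnected ∧ k ∈ I ∧ I ⊆ V := by
  have hnv : V ∈ nhds k := hV.mem_nhds hk
  by_cases hl : ∃ l, l < k
  · obtain ⟨l, hl', hIoc⟩ := exists_Ioc_subset_of_mem_nhds hnv hl
    by_cases hu : ∃ u, k < u
    · obtain ⟨u, hu', hIco⟩ := exists_Ico_subset_of_mem_nhds hnv hu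
      refine ⟨Ioo l u, isOpen_Ioo, Set.ordConnected_Ioo, ⟨hl', hu'⟩, ?_⟩
      intro w hw
      rcases le_or_gt w k with h | h
      · exact hIoc ⟨hw.1, h⟩
      · exact hIco ⟨h.le, hw.2⟩
    · push_neg at hu
      refine ⟨Ioi l, isOpen_Ioi, Set.ordConnected_Ioi, hl', fun w hw => hIoc ⟨hw, hu w⟩⟩
  · push_neg at hl
    by_cases hu : ∃ u, k < u
    · obtain ⟨u, hu', hIco⟩ := exists_Ico_subset_of_mem_nhds hnv hu
      exact ⟨Iio u, isOpen_Iio, Set.ordConnected_Iio, hu', fun w hw => hIco ⟨hl w, hw⟩⟩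
    · push_neg at hu
      refine ⟨univ, isOpen_univ, Set.ordConnected_univ, trivial, fun w _ => ?_⟩
      have : w = k := le_antisymm (hu w) (hl w)
      exact this ▸ hk

/-- A convex open box in `K × K`. -/
structure CvxBox (K : Type*) [Preorder K] [TopologicalSpace K] where
  I : Set K
  J : Set K
  openI : IsOpen I
  openJ : IsOpen J
  convI : I.OrdConnected
  convJ : J.OrdConnected

namespace CvxBox

def toSet (b : CvxBox K) : Set (K × K) := b.I ×ˢ b.J

def Mem (b : CvxBox K) (p : K × K) : Prop := p.1 ∈ b.I ∧ p.2 ∈ b.J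

lemma mem_toSet {b : CvxBox K} {p : K × K} : p ∈ b.toSet ↔ b.Mem p := Iff.rfl

/-- Order-convexity of a box. -/
lemma mem_of_between {b : CvxBox K} {p q r : K × K} (hp : b.Mem p) (hr : b.Mem r)
    (h1 : p ≤ q) (h2 : q ≤ r) : b.Mem q :=
  ⟨b.convI.out hp.1 hr.1 ⟨h1.1, h2.1⟩, b.convJ.out hp.2 hr.2 ⟨h1.2, h2.2⟩⟩

end CvxBox

lemma box_nbhd {U : Set (K × K)} {p : K × K} (hU : IsOpen U) (hp : p ∈ U) :
    ∃ b : CvxBox K, b.Mem p ∧ b.toSet ⊆ U := by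
  obtain ⟨u, v, hu, hv, hpu, hpv, huv⟩ := isOpen_prod_iff.1 hU p.1 p.2 hp
  obtain ⟨I, hIo, hIc, hkI, hIu⟩ := conv_nbhd hu hpu
  obtain ⟨J, hJo, hJc, hkJ, hJv⟩ := conv_nbhd hv hpv
  exact ⟨⟨I, J, hIo, hJo, hIc, hJc⟩, ⟨hkI, hkJ⟩,
    subset_trans (Set.prod_mono hIu hJv) huv⟩

lemma chain_sup {A S : Set (K × K)}
    (hchain : ∀ p ∈ A, ∀ q ∈ A, p ≤ q ∨ q ≤ p)
    (hS : S ⊆ A) (hne : S.Nonempty) :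
    (sSup (Prod.fst '' S), sSup (Prod.snd '' S)) ∈ closure S := by
  set s : K × K := (sSup (Prod.fst '' S), sSup (Prod.snd '' S)) with hs
  rw [mem_closure_iff]
  intro o ho hso
  obtain ⟨b, hbs, hbo⟩ := box_nbhd ho hso
  have h1 : s.1 ∈ closure (Prod.fst '' S) :=
    (isLUB_sSup _).mem_closure (hne.image _)
  have h2 : s.2 ∈ closure (Prod.snd '' S) :=
    (isLUB_sSup _).mem_closure (hne.image _)
  obtain ⟨_, hI1, p1, hp1S, rfl⟩ := mem_closure_iff.1 h1 b.I b.openI hbs.1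
  obtain ⟨_, hJ2, p2, hp2S, rfl⟩ := mem_closure_iff.1 h2 b.J b.openJ hbs.2
  have hle1 : p1 ≤ s := ⟨le_sSup ⟨p1, hp1S, rfl⟩, le_sSup ⟨p1, hp1S, rfl⟩⟩
  have hle2 : p2 ≤ s := ⟨le_sSup ⟨p2, hp2S, rfl⟩, le_sSup ⟨p2, hp2S, rfl⟩⟩
  rcases hchain p1 (hS hp1S) p2 (hS hp2S) with hle | hle
  · refine ⟨p2, hbo ?_, hp2S⟩
    exact CvxBox.mem_toSet.2 ⟨b.convI.out hI1 hbs.1 ⟨hle.1, hle2.1⟩, hJ2⟩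
  · refine ⟨p1, hbo ?_, hp1S⟩
    exact CvxBox.mem_toSet.2 ⟨hI1, b.convJ.out hJ2 hbs.2 ⟨hle.2, hle1.2⟩⟩

end Boxes
section Snoc
variable {α : Type*} [Preorder α]

lemma monotone_snoc {n : ℕ} {f : Fin n → α} {a : α}
    (hf : Monotone f) (ha : ∀ j, f j ≤ a) : Monotone (Fin.snoc f a) := by
  intro j k hjk
  induction k using Fin.lastCases with
  | last =>
    simp only [Fin.snoc_last]
    induction j using Fin.lastCases with
    | last => simp
    | cast j' => simpa using ha j'
  | cast k' =>
    induction j using Fin.lastCases with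
    | last => exact absurd (lt_of_le_of_lt hjk (Fin.castSucc_lt_last k')) (lt_irrefl _)
    | cast j' =>
      simp only [Fin.snoc_castSucc]
      exact hf (by simpa using hjk)

end Snoc

section Stair
variable {X K : Type*} [LinearOrder X] [Infinite X]
  [CompleteLinearOrder K] [TopologicalSpace K] [OrderTopology K]

variable {ι : Type*} (A W : Set (K × K)) (mk : ι → K × K) (tgt : ι → Set (K × K))

def IsStair {M : ℕ} (c : Fin (M + 1) → K × K)
    (D : Fin (M + 1) → CvxBox K) (B : Fin M → CvxBox K) : Prop :=
  c 0 = (⊥, ⊥) ∧ Monotone c ∧ (∀ j, c j ∈ A) ∧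
  (∀ j, (D j).Mem (c j) ∧ (D j).toSet ⊆ W) ∧
  (∀ j : Fin M, (B j).toSet ⊆ W ∧ (B j).Mem (c j.castSucc) ∧ (B j).Mem (c j.succ))

def StairTo (p : K × K) (V : Set ι) : Prop :=
  ∃ (M : ℕ) (c : Fin (M + 1) → K × K) (D : Fin (M + 1) → CvxBox K)
    (B : Fin M → CvxBox K),
    IsStair A W c D B ∧ c (Fin.last M) = p ∧
    ∀ i ∈ V, ∃ j, c j = mk i ∧ (D j).toSet ⊆ tgt i

variable {A W mk tgt}

lemma StairTo.mono_V {p : K × K} {V V' : Set ι} (h : StairTo A W mk tgt p V)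
    (hVV : V' ⊆ V) : StairTo A W mk tgt p V' := by
  obtain ⟨M, c, D, B, h1, h2, h3⟩ := h
  exact ⟨M, c, D, B, h1, h2, fun i hi => h3 i (hVV hi)⟩

lemma StairTo.snoc {p : K × K} {V : Set ι} (h : StairTo A W mk tgt p V)
    (q : K × K) (hq : q ∈ A) (hpq : p ≤ q) (b d : CvxBox K)
    (hbW : b.toSet ⊆ W) (hbp : b.Mem p) (hbq : b.Mem q)
    (hdW : d.toSet ⊆ W) (hdq : d.Mem q) :
    StairTo A W mk tgt q (V ∪ {i | mk i = q ∧ d.toSet ⊆ tgt i}) := by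
  obtain ⟨M, c, D, B, ⟨h0, hmono, hA, hD, hB⟩, hlast, hvis⟩ := h
  refine ⟨M + 1, Fin.snoc c q, Fin.snoc D d, Fin.snoc B b, ⟨?_, ?_, ?_, ?_, ?_⟩, ?_, ?_⟩
  · have : (0 : Fin (M + 2)) = Fin.castSucc 0 := rfl
    rw [this, Fin.snoc_castSucc]; exact h0
  · refine monotone_snoc hmono fun j => ?_
    calc c j ≤ c (Fin.last M) := hmono (Fin.le_last j)
      _ = p := hlast
      _ ≤ q := hpq
  · intro j
    induction j using Fin.lastCases with
    | last => simpa using hq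
    | cast j' => simpa using hA j'
  · intro j
    induction j using Fin.lastCases with
    | last => simp only [Fin.snoc_last]; exact ⟨hdq, hdW⟩
    | cast j' => simp only [Fin.snoc_castSucc]; exact hD j'
  · intro j
    induction j using Fin.lastCases with
    | last =>
      refine ⟨by simpa using hbW, ?_, ?_⟩
      · simp only [Fin.snoc_last, Fin.snoc_castSucc, hlast]
        exact hbp
      · rw [Fin.snoc_last, Fin.succ_last, Fin.snoc_last]
        exact hbq
    | cast j' =>
      refine ⟨by simpa using (hB j').1, ?_, ?_⟩
      · rw [Fin.snoc_castSucc]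
        have : (j'.castSucc).castSucc = (j'.castSucc).castSucc := rfl
        rw [Fin.snoc_castSucc]
        exact (hB j').2.1
      · rw [Fin.snoc_castSucc, Fin.succ_castSucc, Fin.snoc_castSucc]
        exact (hB j').2.2
  · rw [Fin.snoc_last]
  · intro i hi
    rcases hi with hi | hi
    · obtain ⟨j, hj1, hj2⟩ := hvis i hi
      exact ⟨j.castSucc, by rw [Fin.snoc_castSucc]; exact hj1,
        by rw [Fin.snoc_castSucc]; exact hj2⟩
    · exact ⟨Fin.last (M + 1), by rw [Fin.snoc_last]; exact hi.1.symm,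
        by rw [Fin.snoc_last]; exact hi.2⟩

lemma stair_single (hbot : ((⊥, ⊥) : K × K) ∈ A) (d : CvxBox K)
    (hdW : d.toSet ⊆ W) (hd : d.Mem (⊥, ⊥)) :
    StairTo A W mk tgt (⊥, ⊥) (∅ : Set ι) := by
  refine ⟨0, fun _ => (⊥, ⊥), fun _ => d, Fin.elim0,
    ⟨rfl, monotone_const, fun _ => hbot, fun _ => ⟨hd, hdW⟩, fun j => j.elim0⟩, rfl,
    fun i hi => hi.elim⟩

lemma stair_fold (b : CvxBox K) (hbW : b.toSet ⊆ W) :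
    ∀ l : List ι, l.Pairwise (fun i i' => mk i ≤ mk i') →
    (∀ i ∈ l, mk i ∈ A ∧ b.Mem (mk i) ∧
      ∃ d : CvxBox K, d.toSet ⊆ W ∧ d.toSet ⊆ tgt i ∧ d.Mem (mk i)) →
    ∀ p V, StairTo A W mk tgt p V → b.Mem p → (∀ i ∈ l, p ≤ mk i) →
    ∃ q, StairTo A W mk tgt q (V ∪ {i | i ∈ l}) ∧ b.Mem q ∧ p ≤ q ∧
      (q = p ∨ ∃ i ∈ l, q = mk i) := by
  intro l
  induction l with
  | nil =>
    intro _ _ p V hst hbp _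
    refine ⟨p, hst.mono_V ?_, hbp, le_rfl, Or.inl rfl⟩
    intro i hi
    rcases hi with hi | hi
    · exact hi
    · simp at hi
  | cons i t IH =>
    intro hpair hdata p V hst hbp hple
    rw [List.pairwise_cons] at hpair
    obtain ⟨hiA, hbi, d, hd1, hd2, hd3⟩ := hdata i (List.mem_cons_self)
    have hst' := hst.snoc (mk i) hiA (hple i (List.mem_cons_self)) b d hbW hbp hbi hd1 hd3
    obtain ⟨q, hq1, hq2, hq3, hq4⟩ := IH hpair.2
      (fun i' hi' => hdata i' (List.mem_cons_of_mem i hi'))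
      (mk i) _ hst' hbi (fun i' hi' => hpair.1 i' hi')
    refine ⟨q, hq1.mono_V ?_, hq2, le_trans (hple i (List.mem_cons_self)) hq3, ?_⟩
    swap
    · rcases hq4 with rfl | ⟨i', hi', rfl⟩
      · exact Or.inr ⟨i, List.mem_cons_self, rfl⟩
      · exact Or.inr ⟨i', List.mem_cons_of_mem i hi', rfl⟩
    intro i' hi'
    rcases hi' with hi' | hi'
    · exact Or.inl (Or.inl hi')
    · rcases List.mem_cons.1 hi' with rfl | hi'
      · exact Or.inl (Or.inr ⟨rfl, hd2⟩)
      · exact Or.inr hi'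

end Stair

section Sorting
variable {K : Type*} [CompleteLinearOrder K] {ι : Type*} [DecidableEq ι]

lemma exists_chain_min (v : ι → K × K) (s : Finset ι) (hne : s.Nonempty)
    (hcomp : ∀ i ∈ s, ∀ i' ∈ s, v i ≤ v i' ∨ v i' ≤ v i) :
    ∃ m ∈ s, ∀ i ∈ s, v m ≤ v i := by
  induction s using Finset.induction_on with
  | empty => exact absurd hne (by simp)
  | @insert a s' ha IH =>
    rcases s'.eq_empty_or_nonempty with rfl | hne'
    · exact ⟨a, by simp, by simp⟩
    · obtain ⟨m, hm, hmin⟩ := IH hne'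
        (fun i hi i' hi' => hcomp i (Finset.mem_insert_of_mem hi) i' (Finset.mem_insert_of_mem hi'))
      rcases hcomp a (Finset.mem_insert_self a s') m (Finset.mem_insert_of_mem hm) with h | h
      · refine ⟨a, Finset.mem_insert_self a s', fun i hi => ?_⟩
        rcases Finset.mem_insert.1 hi with rfl | hi
        · exact le_rfl
        · exact le_trans h (hmin i hi)
      · refine ⟨m, Finset.mem_insert_of_mem hm, fun i hi => ?_⟩
        rcases Finset.mem_insert.1 hi with rfl | hi
        · exact h
        · exact hmin i hi

lemma exists_sorted_list (v : ι → K × K) (s : Finset ι)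
    (hcomp : ∀ i ∈ s, ∀ i' ∈ s, v i ≤ v i' ∨ v i' ≤ v i) :
    ∃ l : List ι, (∀ i, i ∈ l ↔ i ∈ s) ∧ l.Pairwise (fun i i' => v i ≤ v i') := by
  induction s using Finset.strongInduction with
  | _ s IH =>
    rcases s.eq_empty_or_nonempty with rfl | hne
    · exact ⟨[], by simp, List.Pairwise.nil⟩
    · obtain ⟨m, hm, hmin⟩ := exists_chain_min v s hne hcomp
      obtain ⟨l', hl'1, hl'2⟩ := IH (s.erase m) (Finset.erase_ssubset hm)
        (fun i hi i' hi' => hcomp i (Finset.mem_of_mem_erase hi) i' (Finset.mem_of_mem_erase hi'))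
      refine ⟨m :: l', fun i => ?_, List.pairwise_cons.2 ⟨?_, hl'2⟩⟩
      · rw [List.mem_cons, hl'1, Finset.mem_erase]
        constructor
        · rintro (rfl | ⟨_, h⟩)
          · exact hm
          · exact h
        · intro h
          rcases eq_or_ne i m with rfl | hne'
          · exact Or.inl rfl
          · exact Or.inr ⟨hne', h⟩
      · intro i' hi'
        exact hmin i' (Finset.mem_of_mem_erase ((hl'1 i').1 hi'))

end Sorting

namespace CvxBox
lemma isOpen_toSet {K : Type*} [CompleteLinearOrder K] [TopologicalSpace K] (b : CvxBox K) :
    IsOpen b.toSet := IsOpen.prod b.openI b.openJ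
end CvxBox

section Total
variable {K : Type*} [CompleteLinearOrder K] [TopologicalSpace K] [OrderTopology K]
variable {ι : Type*} [DecidableEq ι] [Fintype ι]

lemma bot_mem_chain {A : Set (K × K)}
    (hchain : ∀ p ∈ A, ∀ q ∈ A, p ≤ q ∨ q ≤ p)
    (hfst : Prod.fst '' A = Set.univ) (hsnd : Prod.snd '' A = Set.univ) :
    ((⊥, ⊥) : K × K) ∈ A := by
  have h1 : (⊥ : K) ∈ Prod.fst '' A := hfst.symm ▸ Set.mem_univ _
  have h2 : (⊥ : K) ∈ Prod.snd '' A := hsnd.symm ▸ Set.mem_univ _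
  obtain ⟨p, hpA, hp1⟩ := h1
  obtain ⟨q, hqA, hq2⟩ := h2
  rcases hchain p hpA q hqA with h | h
  · have : p = (⊥, ⊥) := Prod.ext hp1 (le_bot_iff.1 (h.2.trans_eq hq2))
    exact this ▸ hpA
  · have : q = (⊥, ⊥) := Prod.ext (le_bot_iff.1 (h.1.trans_eq hp1)) hq2
    exact this ▸ hqA

lemma top_mem_chain {A : Set (K × K)}
    (hchain : ∀ p ∈ A, ∀ q ∈ A, p ≤ q ∨ q ≤ p)
    (hfst : Prod.fst '' A = Set.univ) (hsnd : Prod.snd '' A = Set.univ) :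
    ((⊤, ⊤) : K × K) ∈ A := by
  have h1 : (⊤ : K) ∈ Prod.fst '' A := hfst.symm ▸ Set.mem_univ _
  have h2 : (⊤ : K) ∈ Prod.snd '' A := hsnd.symm ▸ Set.mem_univ _
  obtain ⟨p, hpA, hp1⟩ := h1
  obtain ⟨q, hqA, hq2⟩ := h2
  rcases hchain p hpA q hqA with h | h
  · have : q = (⊤, ⊤) := Prod.ext (top_le_iff.1 (hp1 ▸ h.1)) hq2
    exact this ▸ hqA
  · have : p = (⊤, ⊤) := Prod.ext hp1 (top_le_iff.1 (hq2 ▸ h.2))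
    exact this ▸ hpA

lemma stair_total (A W : Set (K × K)) (mk : ι → K × K) (tgt : ι → Set (K × K))
    (hA_cl : IsClosed A)
    (hchain : ∀ p ∈ A, ∀ q ∈ A, p ≤ q ∨ q ≤ p)
    (hconn : IsPreconnected A)
    (hfst : Prod.fst '' A = Set.univ) (hsnd : Prod.snd '' A = Set.univ)
    (hW : IsOpen W) (hAW : A ⊆ W)
    (hmk : ∀ i, mk i ∈ A)
    (htgt : ∀ i, ∃ d : CvxBox K, d.toSet ⊆ W ∧ d.toSet ⊆ tgt i ∧ d.Mem (mk i)) :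
    StairTo A W mk tgt (⊤, ⊤) Set.univ := by
  classical
  have hbot : ((⊥, ⊥) : K × K) ∈ A := bot_mem_chain hchain hfst hsnd
  -- the key step lemma
  have key : ∀ p ∈ A, StairTo A W mk tgt p {i | mk i ≤ p} →
      ∀ q ∈ A, p ≤ q → ∀ b : CvxBox K, b.toSet ⊆ W → b.Mem p → b.Mem q →
      StairTo A W mk tgt q {i | mk i ≤ q} := by
    intro p hpA hpst q hqA hpq b hbW hbp hbq
    set F : Finset ι := Finset.univ.filter (fun i => ¬ mk i ≤ p ∧ mk i ≤ q) with hF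
    have hFmem : ∀ i ∈ F, ¬ mk i ≤ p ∧ mk i ≤ q := by
      intro i hi; simpa [hF] using (Finset.mem_filter.1 hi).2
    obtain ⟨l, hl1, hl2⟩ := exists_sorted_list mk F
      (fun i hi i' hi' => hchain (mk i) (hmk i) (mk i') (hmk i'))
    have hple : ∀ i ∈ l, p ≤ mk i := by
      intro i hi
      rcases hchain (mk i) (hmk i) p hpA with h | h
      · exact absurd h (hFmem i ((hl1 i).1 hi)).1
      · exact h
    obtain ⟨q', hq'1, hq'2, hq'3, hq'4⟩ := stair_fold b hbW l hl2
      (fun i hi => ⟨hmk i, CvxBox.mem_of_between hbp hbq (hple i hi)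
        (hFmem i ((hl1 i).1 hi)).2, htgt i⟩)
      p {i | mk i ≤ p} hpst hbp hple
    have hq'q : q' ≤ q := by
      rcases hq'4 with rfl | ⟨i, hi, rfl⟩
      · exact hpq
      · exact (hFmem i ((hl1 i).1 hi)).2
    obtain ⟨d, hdq, hdW⟩ := box_nbhd hW (hAW hqA)
    have hfin := hq'1.snoc q hqA hq'q b d hbW hq'2 hbq hdW hdq
    refine hfin.mono_V ?_
    intro i hi
    by_cases h' : mk i ≤ p
    · exact Set.mem_union_left _ (Set.mem_union_left _ h')
    · exact Set.mem_union_left _ (Set.mem_union_right _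
        ((hl1 i).2 (Finset.mem_filter.2 ⟨Finset.mem_univ _, h', hi⟩)))
  -- base point
  have hbase : StairTo A W mk tgt (⊥, ⊥) {i | mk i ≤ (⊥, ⊥)} := by
    obtain ⟨d0, hd0b, hd0W⟩ := box_nbhd hW (hAW hbot)
    have hst0 : StairTo A W mk tgt (⊥, ⊥) (∅ : Set ι) := stair_single hbot d0 hd0W hd0b
    set F : Finset ι := Finset.univ.filter (fun i => mk i ≤ (⊥, ⊥)) with hF
    obtain ⟨l, hl1, hl2⟩ := exists_sorted_list mk F
      (fun i hi i' hi' => hchain (mk i) (hmk i) (mk i') (hmk i'))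
    have hmkbot : ∀ i ∈ l, mk i = (⊥, ⊥) := by
      intro i hi
      have := (Finset.mem_filter.1 ((hl1 i).1 hi)).2
      exact le_antisymm this bot_le
    obtain ⟨q, hq1, hq2, hq3, hq4⟩ := stair_fold d0 hd0W l hl2
      (fun i hi => ⟨hmk i, by rw [hmkbot i hi]; exact hd0b, htgt i⟩)
      (⊥, ⊥) ∅ hst0 hd0b (fun i hi => bot_le)
    have hqbot : q = (⊥, ⊥) := by
      rcases hq4 with rfl | ⟨i, hi, rfl⟩
      · rfl
      · exact hmkbot i hi
    rw [hqbot] at hq1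
    refine hq1.mono_V ?_
    intro i hi
    exact Or.inr ((hl1 i).2 (Finset.mem_filter.2 ⟨Finset.mem_univ _, hi⟩))
  set T : Set (K × K) := {p | p ∈ A ∧ StairTo A W mk tgt p {i | mk i ≤ p}} with hT
  have hTne : T.Nonempty := ⟨(⊥, ⊥), hbot, hbase⟩
  have hsub : T ⊆ A := fun p hp => hp.1
  set s : K × K := (sSup (Prod.fst '' T), sSup (Prod.snd '' T)) with hs
  have hscl : s ∈ closure T := chain_sup hchain hsub hTne
  have hsA : s ∈ A := by
    have : closure T ⊆ A := by
      rw [← hA_cl.closure_eq]; exact closure_mono hsub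
    exact this hscl
  have hTle : ∀ w ∈ T, w ≤ s :=
    fun w hw => ⟨le_sSup ⟨w, hw, rfl⟩, le_sSup ⟨w, hw, rfl⟩⟩
  obtain ⟨b, hbs, hbW⟩ := box_nbhd hW (hAW hsA)
  obtain ⟨p, hpb, hpT⟩ := mem_closure_iff.1 hscl b.toSet b.isOpen_toSet hbs
  have hsT : s ∈ T := ⟨hsA, key p hpT.1 hpT.2 s hsA (hTle p hpT) b hbW hpb hbs⟩
  -- all of A is below s
  have hall : ∀ q ∈ A, q ≤ s := by
    by_contra hc
    push_neg at hc
    obtain ⟨q0, hq0A, hq0⟩ := hc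
    have hopen1 : ∀ u, u ∈ A → u ≤ s → ∃ O, IsOpen O ∧ u ∈ O ∧ ∀ w ∈ A ∩ O, w ≤ s := by
      intro u huA hus
      rcases eq_or_lt_of_le hus with heq | hlt
      · refine ⟨b.toSet, b.isOpen_toSet, by rw [heq]; exact CvxBox.mem_toSet.2 hbs, ?_⟩
        rintro w ⟨hwA, hwb⟩
        rcases hchain w hwA s hsA with h | h
        · exact h
        · exact hTle w ⟨hwA, key s hsA hsT.2 w hwA h b hbW hbs (CvxBox.mem_toSet.1 hwb)⟩
      · rcases lt_or_eq_of_le hus.1 with h1 | h1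
        · refine ⟨Prod.fst ⁻¹' Set.Iio s.1, isOpen_Iio.preimage continuous_fst, h1, ?_⟩
          rintro w ⟨hwA, hw⟩
          rcases hchain w hwA s hsA with h | h
          · exact h
          · exact absurd (lt_of_le_of_lt h.1 hw) (lt_irrefl _)
        · have h2 : u.2 < s.2 := by
            rcases lt_or_eq_of_le hus.2 with h2 | h2
            · exact h2
            · exact absurd (Prod.ext h1 h2) (ne_of_lt hlt)
          refine ⟨Prod.snd ⁻¹' Set.Iio s.2, isOpen_Iio.preimage continuous_snd, h2, ?_⟩
          rintro w ⟨hwA, hw⟩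
          rcases hchain w hwA s hsA with h | h
          · exact h
          · exact absurd (lt_of_le_of_lt h.2 hw) (lt_irrefl _)
    have hopen2 : ∀ u, u ∈ A → ¬ u ≤ s → ∃ O, IsOpen O ∧ u ∈ O ∧ ∀ w ∈ A ∩ O, ¬ w ≤ s := by
      intro u huA hnus
      have hsu : s ≤ u := (hchain u huA s hsA).resolve_left hnus
      rcases lt_or_eq_of_le hsu.1 with h1 | h1
      · refine ⟨Prod.fst ⁻¹' Set.Ioi s.1, isOpen_Ioi.preimage continuous_fst, h1, ?_⟩
        rintro w ⟨hwA, hw⟩ hws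
        exact absurd (lt_of_lt_of_le hw hws.1) (lt_irrefl _)
      · have h2 : s.2 < u.2 := by
          rcases lt_or_eq_of_le hsu.2 with h2 | h2
          · exact h2
          · exact absurd (Prod.ext h1.symm h2.symm)
              (fun h => hnus (le_of_eq h))
        refine ⟨Prod.snd ⁻¹' Set.Ioi s.2, isOpen_Ioi.preimage continuous_snd, h2, ?_⟩
        rintro w ⟨hwA, hw⟩ hws
        exact absurd (lt_of_lt_of_le hw hws.2) (lt_irrefl _)
    choose Of1 hOf1o hOf1m hOf1p using hopen1
    choose Of2 hOf2o hOf2m hOf2p using hopen2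
    have hO : (A ∩ ((⋃ u : {u : K × K // u ∈ A ∧ u ≤ s}, Of1 u.1 u.2.1 u.2.2) ∩
        (⋃ u : {u : K × K // u ∈ A ∧ ¬ u ≤ s}, Of2 u.1 u.2.1 u.2.2))).Nonempty := by
      refine hconn _ _
        (isOpen_iUnion fun u => hOf1o u.1 u.2.1 u.2.2)
        (isOpen_iUnion fun u => hOf2o u.1 u.2.1 u.2.2)
        ?_ ?_ ?_
      · intro w hwA
        by_cases h : w ≤ s
        · exact Or.inl (Set.mem_iUnion.2 ⟨⟨w, hwA, h⟩, hOf1m w hwA h⟩)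
        · exact Or.inr (Set.mem_iUnion.2 ⟨⟨w, hwA, h⟩, hOf2m w hwA h⟩)
      · exact ⟨s, hsA, Set.mem_iUnion.2 ⟨⟨s, hsA, le_rfl⟩, hOf1m s hsA le_rfl⟩⟩
      · exact ⟨q0, hq0A, Set.mem_iUnion.2 ⟨⟨q0, hq0A, hq0⟩, hOf2m q0 hq0A hq0⟩⟩
    obtain ⟨w, hwA, hw1, hw2⟩ := hO
    obtain ⟨u1, hu1⟩ := Set.mem_iUnion.1 hw1
    obtain ⟨u2, hu2⟩ := Set.mem_iUnion.1 hw2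
    exact hOf2p u2.1 u2.2.1 u2.2.2 w ⟨hwA, hu2⟩ (hOf1p u1.1 u1.2.1 u1.2.2 w ⟨hwA, hu1⟩)
  -- s is the top
  have hstop : s = (⊤, ⊤) := by
    have h1 : (⊤ : K) ∈ Prod.fst '' A := hfst.symm ▸ Set.mem_univ _
    have h2 : (⊤ : K) ∈ Prod.snd '' A := hsnd.symm ▸ Set.mem_univ _
    obtain ⟨p1, hp1A, hp11⟩ := h1
    obtain ⟨p2, hp2A, hp22⟩ := h2
    refine Prod.ext (top_le_iff.1 ?_) (top_le_iff.1 ?_)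
    · exact hp11 ▸ (hall p1 hp1A).1
    · exact hp22 ▸ (hall p2 hp2A).2
  have := hsT.2
  rw [hstop] at this
  refine this.mono_V ?_
  intro i _
  exact ⟨le_top, le_top⟩
end Total

section Grid
variable {X K : Type*} [LinearOrder X] [Infinite X]
  [CompleteLinearOrder K] [TopologicalSpace K] [OrderTopology K]

lemma grid_choice (hX : UltrahomogeneousOrder X) (e : X ↪o K)
    (hdense : ∀ k : K, k = sSup ((fun x : X => e x) '' {x : X | e x ≤ k}) ∧
                       k = sInf ((fun x : X => e x) '' {x : X | k ≤ e x}))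
    (hbt : (⊥ : K) < ⊤)
    {M : ℕ} (t : Fin (M + 1) → K) (I : Fin (M + 1) → Set K)
    (hmono : Monotone t) (h0 : t 0 = ⊥)
    (hop : ∀ j, IsOpen (I j)) (hmem : ∀ j, t j ∈ I j) :
    ∃ x : Fin (M + 1) → X, StrictMono (fun j => (e (x j) : K)) ∧ ∀ j, e (x j) ∈ I j := by
  classical
  have hv : ∀ j, ∃ v : K, t j = ⊥ → (⊥ < v ∧ Set.Iio v ⊆ I j) := by
    intro j
    by_cases h : t j = ⊥
    · obtain ⟨u, hu, hsub⟩ := exists_Ico_subset_of_mem_nhds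
        ((hop j).mem_nhds (hmem j)) ⟨⊤, by rw [h]; exact hbt⟩
      refine ⟨u, fun _ => ⟨h ▸ hu, ?_⟩⟩
      intro z hz
      exact hsub ⟨h ▸ bot_le, hz⟩
    · exact ⟨⊤, fun h' => absurd h' h⟩
  choose v hvspec using hv
  set w : K := Finset.univ.inf' Finset.univ_nonempty
    (fun j : Fin (M + 1) => if ⊥ < t j then t j else v j) with hw
  have hbw : ⊥ < w := by
    rw [hw, Finset.lt_inf'_iff]
    intro j _
    by_cases h : ⊥ < t j
    · rw [if_pos h]; exact h
    · rw [if_neg h]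
      exact (hvspec j (le_bot_iff.1 (not_lt.1 h))).1
  have hwle : ∀ j, ⊥ < t j → w ≤ t j := by
    intro j h
    have := Finset.inf'_le (fun j : Fin (M + 1) => if ⊥ < t j then t j else v j)
      (Finset.mem_univ j)
    rwa [if_pos h] at this
  have hwv : ∀ j, t j = ⊥ → w ≤ v j := by
    intro j h
    have := Finset.inf'_le (fun j : Fin (M + 1) => if ⊥ < t j then t j else v j)
      (Finset.mem_univ j)
    rwa [if_neg (by rw [h]; exact lt_irrefl _)] at this
  have main : ∀ m : ℕ, ∀ hm : m + 1 ≤ M + 1, ∃ x : Fin (m + 1) → X,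
      (∀ j k : Fin (m + 1), j < k → e (x j) < e (x k)) ∧
      (∀ j, e (x j) ∈ I (Fin.castLE hm j)) ∧
      (e (x (Fin.last m)) < t (Fin.castLE hm (Fin.last m)) ∨
        (t (Fin.castLE hm (Fin.last m)) = ⊥ ∧ e (x (Fin.last m)) < w)) := by
    intro m
    induction m with
    | zero =>
      intro hm
      obtain ⟨x0, _, hx0'⟩ := approx_ge e hdense hbw
      refine ⟨fun _ => x0, ?_, ?_, ?_⟩
      · intro j k hjk
        have hj := j.isLt
        have hk := k.isLt
        have : j.val < k.val := hjk
        omega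
      · intro j
        have hj0 : Fin.castLE hm j = 0 := by
          apply Fin.ext
          have := j.isLt
          simp only [Fin.coe_castLE, Fin.val_zero]
          omega
        rw [hj0]
        exact (hvspec 0 h0).2 (lt_of_lt_of_le hx0' (hwv 0 h0))
      · right
        have hcz : Fin.castLE hm (Fin.last 0) = 0 := rfl
        rw [hcz]
        exact ⟨h0, hx0'⟩
    | succ m IH =>
      intro hm
      have hm' : m + 1 ≤ M + 1 := by omega
      obtain ⟨x, hx1, hx2, hx3⟩ := IH hm'
      set jn : Fin (M + 1) := Fin.castLE hm (Fin.last (m + 1)) with hjn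
      set jp : Fin (M + 1) := Fin.castLE hm' (Fin.last m) with hjp
      have hjple : jp ≤ jn := by
        rw [Fin.le_def]
        simp [hjn, hjp]
      set q : K := e (x (Fin.last m)) with hqdef
      have hqle : ∀ j : Fin (m + 1), e (x j) ≤ q := by
        intro j
        rcases lt_or_eq_of_le (Fin.le_last j) with h | h
        · exact le_of_lt (hx1 j (Fin.last m) h)
        · rw [h]
      have hcastidx : ∀ j : Fin (m + 1),
          Fin.castLE hm (Fin.castSucc j) = Fin.castLE hm' j := fun j => rfl
      by_cases hpos : ⊥ < t jn
      · obtain ⟨u, hu, hsub⟩ := exists_Ioc_subset_of_mem_nhds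
          ((hop jn).mem_nhds (hmem jn)) ⟨⊥, hpos⟩
        have hqlt : q < t jn := by
          rcases hx3 with h | ⟨hb, hw'⟩
          · exact lt_of_lt_of_le h (hmono hjple)
          · exact lt_of_lt_of_le hw' (hwle jn hpos)
        have hαlt : max u q < t jn := max_lt hu hqlt
        obtain ⟨xn, hxn1, hxn2⟩ := approx_mid e hdense hX hαlt
        have hqxn : q < e xn := lt_of_le_of_lt (le_max_right u q) hxn1
        refine ⟨Fin.snoc x xn, ?_, ?_, ?_⟩
        · intro j k hjk
          induction k using Fin.lastCases with
          | last =>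
            induction j using Fin.lastCases with
            | last => exact absurd hjk (lt_irrefl _)
            | cast j' =>
              rw [Fin.snoc_castSucc, Fin.snoc_last]
              exact lt_of_le_of_lt (hqle j') hqxn
          | cast k' =>
            induction j using Fin.lastCases with
            | last => exact absurd (lt_trans hjk (Fin.castSucc_lt_last k')) (lt_irrefl _)
            | cast j' =>
              rw [Fin.snoc_castSucc, Fin.snoc_castSucc]
              exact hx1 j' k' (by rwa [Fin.castSucc_lt_castSucc_iff] at hjk)
        · intro j
          induction j using Fin.lastCases with
          | last =>
            rw [Fin.snoc_last]
            exact hsub ⟨lt_of_le_of_lt (le_max_left u q) hxn1, le_of_lt hxn2⟩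
          | cast j' =>
            rw [Fin.snoc_castSucc, hcastidx j']
            exact hx2 j'
        · left
          rw [Fin.snoc_last]
          exact hxn2
      · have hbot' : t jn = ⊥ := le_bot_iff.1 (not_lt.1 hpos)
        have hqw : q < w := by
          rcases hx3 with h | ⟨hb, hw'⟩
          · exact absurd (lt_of_lt_of_le h (le_trans (hmono hjple) (le_of_eq hbot')))
              not_lt_bot
          · exact hw'
        obtain ⟨xn, hxn1, hxn2⟩ := approx_mid e hdense hX hqw
        refine ⟨Fin.snoc x xn, ?_, ?_, ?_⟩
        · intro j k hjk
          induction k using Fin.lastCases with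
          | last =>
            induction j using Fin.lastCases with
            | last => exact absurd hjk (lt_irrefl _)
            | cast j' =>
              rw [Fin.snoc_castSucc, Fin.snoc_last]
              exact lt_of_le_of_lt (hqle j') hxn1
          | cast k' =>
            induction j using Fin.lastCases with
            | last => exact absurd (lt_trans hjk (Fin.castSucc_lt_last k')) (lt_irrefl _)
            | cast j' =>
              rw [Fin.snoc_castSucc, Fin.snoc_castSucc]
              exact hx1 j' k' (by rwa [Fin.castSucc_lt_castSucc_iff] at hjk)
        · intro j
          induction j using Fin.lastCases with
          | last =>
            rw [Fin.snoc_last]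
            exact (hvspec jn hbot').2 (lt_of_lt_of_le hxn2 (hwv jn hbot'))
          | cast j' =>
            rw [Fin.snoc_castSucc, hcastidx j']
            exact hx2 j'
        · right
          rw [Fin.snoc_last]
          exact ⟨hbot', hxn2⟩
  obtain ⟨x, hx1, hx2, _⟩ := main M (le_refl _)
  have hid : ∀ j : Fin (M + 1), Fin.castLE (le_refl (M + 1)) j = j := fun j => rfl
  refine ⟨x, fun j k hjk => hx1 j k hjk, fun j => ?_⟩
  rw [← hid j]
  exact hx2 j

end Grid

section Cover
lemma fin_cover {K : Type*} [LinearOrder K] {M : ℕ} (xb : Fin (M + 1) → K) (k : K) :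
    k ≤ xb 0 ∨ xb (Fin.last M) ≤ k ∨
      ∃ j : Fin M, xb j.castSucc ≤ k ∧ k ≤ xb j.succ := by
  classical
  by_cases h0 : k ≤ xb 0
  · exact Or.inl h0
  · set S : Finset (Fin (M + 1)) := Finset.univ.filter (fun j => xb j ≤ k) with hS
    have hne : S.Nonempty :=
      ⟨0, Finset.mem_filter.2 ⟨Finset.mem_univ _, le_of_not_ge h0⟩⟩
    have hjmS : xb (S.max' hne) ≤ k := (Finset.mem_filter.1 (S.max'_mem hne)).2
    by_cases hlast : S.max' hne = Fin.last M
    · exact Or.inr (Or.inl (hlast ▸ hjmS))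
    · refine Or.inr (Or.inr ⟨(S.max' hne).castPred hlast, ?_, ?_⟩)
      · rw [Fin.castSucc_castPred]; exact hjmS
      · by_contra hc
        have hmem : ((S.max' hne).castPred hlast).succ ∈ S :=
          Finset.mem_filter.2 ⟨Finset.mem_univ _, le_of_lt (not_le.1 hc)⟩
        have h1 := Finset.le_max' S _ hmem
        have h2 : S.max' hne < ((S.max' hne).castPred hlast).succ := by
          conv_lhs => rw [← Fin.castSucc_castPred (S.max' hne) hlast]
          exact Fin.castSucc_lt_succ
        exact absurd (lt_of_lt_of_le h2 h1) (lt_irrefl _)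
end Cover

section MainApprox
variable {X K : Type*} [LinearOrder X] [Infinite X]
  [CompleteLinearOrder K] [TopologicalSpace K] [OrderTopology K]

lemma main_approx (hX : UltrahomogeneousOrder X) (e : X ↪o K)
    (hdense : ∀ k : K, k = sSup ((fun x : X => e x) '' {x : X | e x ≤ k}) ∧
                       k = sInf ((fun x : X => e x) '' {x : X | k ≤ e x}))
    (hatf : (X ≃o X) → K → K)
    (hhat : ∀ (g : X ≃o X) (k : K),
      hatf g k = sSup ((fun x : X => e (g x)) '' {x : X | e x ≤ k}))
    (A : Set (K × K)) (hA_cl : IsClosed A)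
    (hchain : ∀ p ∈ A, ∀ q ∈ A, p ≤ q ∨ q ≤ p)
    (hconn : IsPreconnected A)
    (hfst : Prod.fst '' A = Set.univ) (hsnd : Prod.snd '' A = Set.univ)
    (W : Set (K × K)) (hW : IsOpen W) (hAW : A ⊆ W)
    {n : ℕ} (Ws : Fin n → Set (K × K)) (hWs : ∀ i, IsOpen (Ws i))
    (hmeet : ∀ i, (A ∩ Ws i).Nonempty) :
    ∃ g : X ≃o X, {p : K × K | p.2 = hatf g p.1} ⊆ W ∧
      ∀ i, ({p : K × K | p.2 = hatf g p.1} ∩ Ws i).Nonempty := by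
  classical
  -- nontriviality of K
  have hbt : (⊥ : K) < ⊤ := by
    obtain ⟨x₀, y₀, hxy⟩ := exists_pair_ne X
    rcases hxy.lt_or_gt with h | h
    · exact lt_of_le_of_lt bot_le (lt_of_lt_of_le (e.strictMono h) le_top)
    · exact lt_of_le_of_lt bot_le (lt_of_lt_of_le (e.strictMono h) le_top)
  -- markers
  have hmk' : ∀ i, (hmeet i).choose ∈ A ∧ (hmeet i).choose ∈ Ws i := fun i => (hmeet i).choose_spec
  set mk : Fin n → K × K := fun i => (hmeet i).choose with hmkdef
  have htgt : ∀ i, ∃ d : CvxBox K, d.toSet ⊆ W ∧ d.toSet ⊆ Ws i ∧ d.Mem (mk i) := by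
    intro i
    obtain ⟨d, hd1, hd2⟩ := box_nbhd (hW.inter (hWs i))
      (Set.mem_inter (hAW (hmk' i).1) (hmk' i).2)
    exact ⟨d, subset_trans hd2 Set.inter_subset_left,
      subset_trans hd2 Set.inter_subset_right, hd1⟩
  obtain ⟨M, c, D, B, ⟨hc0, hcmono, hcA, hD, hB⟩, hclast, hvis⟩ :=
    stair_total A W mk Ws hA_cl hchain hconn hfst hsnd hW hAW (fun i => (hmk' i).1) htgt
  -- interval systems
  set BI : Fin (M + 1) → Set K := fun j => (D j).I ∩
    ⋂ j' : Fin M, ((if j'.castSucc = j then (B j').I else Set.univ) ∩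
      (if j'.succ = j then (B j').I else Set.univ)) with hBI
  set BJ : Fin (M + 1) → Set K := fun j => (D j).J ∩
    ⋂ j' : Fin M, ((if j'.castSucc = j then (B j').J else Set.univ) ∩
      (if j'.succ = j then (B j').J else Set.univ)) with hBJ
  have hBIopen : ∀ j, IsOpen (BI j) := by
    intro j
    refine (D j).openI.inter (isOpen_iInter_of_finite fun j' => IsOpen.inter ?_ ?_) <;>
      · split
        · exact (B _).openI
        · exact isOpen_univ
  have hBJopen : ∀ j, IsOpen (BJ j) := by
    intro j
    refine (D j).openJ.inter (isOpen_iInter_of_finite fun j' => IsOpen.inter ?_ ?_) <;>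
      · split
        · exact (B _).openJ
        · exact isOpen_univ
  have hBImem : ∀ j, (c j).1 ∈ BI j := by
    intro j
    refine ⟨(hD j).1.1, Set.mem_iInter.2 fun j' => ⟨?_, ?_⟩⟩
    · split
      · next h => exact h ▸ (hB j').2.1.1
      · exact Set.mem_univ _
    · split
      · next h => exact h ▸ (hB j').2.2.1
      · exact Set.mem_univ _
  have hBJmem : ∀ j, (c j).2 ∈ BJ j := by
    intro j
    refine ⟨(hD j).1.2, Set.mem_iInter.2 fun j' => ⟨?_, ?_⟩⟩
    · split
      · next h => exact h ▸ (hB j').2.1.2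
      · exact Set.mem_univ _
    · split
      · next h => exact h ▸ (hB j').2.2.2
      · exact Set.mem_univ _
  -- choose the grid
  obtain ⟨x, hxsm, hxmem⟩ := grid_choice hX e hdense hbt (fun j => (c j).1) BI
    (fun a b hab => (hcmono hab).1) (by show (c 0).1 = ⊥; rw [hc0]) hBIopen hBImem
  obtain ⟨y, hysm, hymem⟩ := grid_choice hX e hdense hbt (fun j => (c j).2) BJ
    (fun a b hab => (hcmono hab).2) (by show (c 0).2 = ⊥; rw [hc0]) hBJopen hBJmem
  obtain ⟨g, hg⟩ := hX (M + 1) x y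
    (fun a b hab => e.lt_iff_lt.1 (hxsm hab)) (fun a b hab => e.lt_iff_lt.1 (hysm hab))
  have hΓgrid : ∀ j, hatf g (e (x j)) = e (y j) := by
    intro j
    rw [hat_e e hdense hatf hhat g (x j), hg j]
  have hmono' : Monotone (hatf g) := hat_mono e hatf hhat g
  -- membership extraction
  have hxD : ∀ j, e (x j) ∈ (D j).I := fun j => (hxmem j).1
  have hyD : ∀ j, e (y j) ∈ (D j).J := fun j => (hymem j).1
  have hxBc : ∀ j' : Fin M, e (x j'.castSucc) ∈ (B j').I := by
    intro j'
    have := (Set.mem_iInter.1 (hxmem j'.castSucc).2 j').1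
    rwa [if_pos rfl] at this
  have hxBs : ∀ j' : Fin M, e (x j'.succ) ∈ (B j').I := by
    intro j'
    have := (Set.mem_iInter.1 (hxmem j'.succ).2 j').2
    rwa [if_pos rfl] at this
  have hyBc : ∀ j' : Fin M, e (y j'.castSucc) ∈ (B j').J := by
    intro j'
    have := (Set.mem_iInter.1 (hymem j'.castSucc).2 j').1
    rwa [if_pos rfl] at this
  have hyBs : ∀ j' : Fin M, e (y j'.succ) ∈ (B j').J := by
    intro j'
    have := (Set.mem_iInter.1 (hymem j'.succ).2 j').2
    rwa [if_pos rfl] at this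
  refine ⟨g, ?_, ?_⟩
  · -- the graph is contained in W
    intro p hp
    have hp2 : p.2 = hatf g p.1 := hp
    rcases fin_cover (fun j => e (x j)) p.1 with hk | hk | ⟨j, hk1, hk2⟩
    · refine (hD 0).2 (CvxBox.mem_toSet.2 ?_)
      have hbotmem : (D 0).Mem (⊥, ⊥) := hc0 ▸ (hD 0).1
      refine CvxBox.mem_of_between (r := (e (x 0), e (y 0))) hbotmem
        ⟨hxD 0, hyD 0⟩ ⟨bot_le, bot_le⟩ ⟨hk, ?_⟩
      rw [hp2, ← hΓgrid 0]
      exact hmono' hk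
    · refine (hD (Fin.last M)).2 (CvxBox.mem_toSet.2 ?_)
      have htopmem : (D (Fin.last M)).Mem (⊤, ⊤) := hclast ▸ (hD (Fin.last M)).1
      refine CvxBox.mem_of_between (p := (e (x (Fin.last M)), e (y (Fin.last M))))
        ⟨hxD (Fin.last M), hyD (Fin.last M)⟩ htopmem
        ⟨hk, ?_⟩ ⟨le_top, le_top⟩
      rw [hp2, ← hΓgrid (Fin.last M)]
      exact hmono' hk
    · refine (hB j).1 (CvxBox.mem_toSet.2 ?_)
      refine CvxBox.mem_of_between (p := (e (x j.castSucc), e (y j.castSucc)))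
        (r := (e (x j.succ), e (y j.succ)))
        ⟨hxBc j, hyBc j⟩ ⟨hxBs j, hyBs j⟩ ⟨hk1, ?_⟩ ⟨hk2, ?_⟩
      · rw [hp2, ← hΓgrid j.castSucc]
        exact hmono' hk1
      · rw [hp2, ← hΓgrid j.succ]
        exact hmono' hk2
  · -- the graph meets each marked open set
    intro i
    obtain ⟨j, hj1, hj2⟩ := hvis i (Set.mem_univ i)
    refine ⟨(e (x j), e (y j)), ?_, ?_⟩
    · exact (hΓgrid j).symm
    · exact hj2 (CvxBox.mem_toSet.2 ⟨hxD j, hyD j⟩)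

end MainApprox

section Graphs
variable {X K : Type*} [LinearOrder X] [Infinite X]
  [CompleteLinearOrder K] [TopologicalSpace K] [OrderTopology K]

lemma graph_props (hX : UltrahomogeneousOrder X) (e : X ↪o K)
    (hdense : ∀ k : K, k = sSup ((fun x : X => e x) '' {x : X | e x ≤ k}) ∧
                       k = sInf ((fun x : X => e x) '' {x : X | k ≤ e x}))
    (hatf : (X ≃o X) → K → K)
    (hhat : ∀ (g : X ≃o X) (k : K),
      hatf g k = sSup ((fun x : X => e (g x)) '' {x : X | e x ≤ k}))
    (g : X ≃o X) :
    IsClosed {p : K × K | p.2 = hatf g p.1} ∧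
    (∀ p ∈ {p : K × K | p.2 = hatf g p.1}, ∀ q ∈ {p : K × K | p.2 = hatf g p.1},
      (p.1 ≤ q.1 ∧ p.2 ≤ q.2) ∨ (q.1 ≤ p.1 ∧ q.2 ≤ p.2)) ∧
    IsConnected {p : K × K | p.2 = hatf g p.1} ∧
    Prod.fst '' {p : K × K | p.2 = hatf g p.1} = Set.univ ∧
    Prod.snd '' {p : K × K | p.2 = hatf g p.1} = Set.univ := by
  haveI : DenselyOrdered K := ⟨fun a b h => K_dense e hdense hX h⟩
  haveI : PreconnectedSpace K := ⟨by
    rw [← Set.Icc_bot_top]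
    exact isPreconnected_Icc⟩
  haveI : ConnectedSpace K := { toNonempty := ⟨⊥⟩ }
  obtain ⟨Gk, hGk⟩ := hat_orderIso e hdense hatf hhat g
  have hcont : Continuous (hatf g) := by
    have : Continuous Gk := Gk.toHomeomorph.continuous
    convert this using 1
    funext k
    exact (hGk k).symm
  have hmono := hat_mono e hatf hhat g
  refine ⟨?_, ?_, ?_, ?_, ?_⟩
  · exact isClosed_eq continuous_snd (hcont.comp continuous_fst)
  · intro p hp q hq
    have hp2 : p.2 = hatf g p.1 := hp
    have hq2 : q.2 = hatf g q.1 := hq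
    rcases le_total p.1 q.1 with h | h
    · exact Or.inl ⟨h, by rw [hp2, hq2]; exact hmono h⟩
    · exact Or.inr ⟨h, by rw [hp2, hq2]; exact hmono h⟩
  · have hrange : {p : K × K | p.2 = hatf g p.1} =
        Set.range (fun k : K => (k, hatf g k)) := by
      ext p
      constructor
      · intro hp
        exact ⟨p.1, Prod.ext rfl (Eq.symm hp)⟩
      · rintro ⟨k, rfl⟩
        rfl
    rw [hrange]
    exact isConnected_range (continuous_id.prodMk hcont)
  · ext k
    simp only [Set.mem_image, Set.mem_univ, iff_true]
    exact ⟨(k, hatf g k), rfl, rfl⟩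
  · ext k
    simp only [Set.mem_image, Set.mem_univ, iff_true]
    refine ⟨(Gk.symm k, hatf g (Gk.symm k)), rfl, ?_⟩
    rw [← hGk (Gk.symm k)]
    exact Gk.apply_symm_apply k

end Graphs

section Vietoris
variable {Z : Type*} [TopologicalSpace Z]

lemma viet_open_meets (W : Set Z) (hW : IsOpen W) :
    @IsOpen _ (vietorisTop Z) {A : HClosed Z | ((A : Set Z) ∩ W).Nonempty} :=
  TopologicalSpace.GenerateOpen.basic _ (Or.inl ⟨W, hW, rfl⟩)

lemma viet_open_sub (W : Set Z) (hW : IsOpen W) :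
    @IsOpen _ (vietorisTop Z) {A : HClosed Z | (A : Set Z) ⊆ W} :=
  TopologicalSpace.GenerateOpen.basic _ (Or.inr ⟨W, hW, rfl⟩)

lemma standard_nbhd {U : Set (HClosed Z)} (hU : @IsOpen _ (vietorisTop Z) U)
    {A : HClosed Z} (hA : A ∈ U) :
    ∃ (W : Set Z) (n : ℕ) (Ws : Fin n → Set Z),
      IsOpen W ∧ (A : Set Z) ⊆ W ∧ (∀ i, IsOpen (Ws i)) ∧
      (∀ i, ((A : Set Z) ∩ Ws i).Nonempty) ∧
      ∀ B : HClosed Z, (B : Set Z) ⊆ W →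
        (∀ i, ((B : Set Z) ∩ Ws i).Nonempty) → B ∈ U := by
  have hU' : TopologicalSpace.GenerateOpen _ U := hU
  clear hU
  revert hA
  induction hU' with
  | basic s hs =>
    intro hA
    rcases hs with ⟨W₀, hW₀, rfl⟩ | ⟨W₀, hW₀, rfl⟩
    · exact ⟨Set.univ, 1, fun _ => W₀, isOpen_univ, Set.subset_univ _, fun _ => hW₀,
        fun _ => hA, fun B _ hB => hB 0⟩
    · exact ⟨W₀, 0, Fin.elim0, hW₀, hA, fun i => i.elim0, fun i => i.elim0,
        fun B hB _ => hB⟩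
  | univ =>
    exact fun _ => ⟨Set.univ, 0, Fin.elim0, isOpen_univ, Set.subset_univ _,
      fun i => i.elim0, fun i => i.elim0, fun B _ _ => trivial⟩
  | inter U1 U2 h1 h2 ih1 ih2 =>
    intro hA
    obtain ⟨W1, n1, Ws1, hW1o, hAW1, hWs1o, hWs1m, hB1⟩ := ih1 hA.1
    obtain ⟨W2, n2, Ws2, hW2o, hAW2, hWs2o, hWs2m, hB2⟩ := ih2 hA.2
    refine ⟨W1 ∩ W2, n1 + n2,
      fun i => if h : (i : ℕ) < n1 then Ws1 ⟨i, h⟩ else Ws2 ⟨(i : ℕ) - n1, by omega⟩,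
      hW1o.inter hW2o, Set.subset_inter hAW1 hAW2, ?_, ?_, ?_⟩
    · intro i
      dsimp only
      by_cases h : (i : ℕ) < n1
      · rw [dif_pos h]; exact hWs1o _
      · rw [dif_neg h]; exact hWs2o _
    · intro i
      dsimp only
      by_cases h : (i : ℕ) < n1
      · rw [dif_pos h]; exact hWs1m _
      · rw [dif_neg h]; exact hWs2m _
    · intro B hBW hBm
      refine ⟨hB1 B (hBW.trans Set.inter_subset_left) ?_,
        hB2 B (hBW.trans Set.inter_subset_right) ?_⟩
      · intro i
        have h := hBm ⟨(i : ℕ), by omega⟩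
        dsimp only at h
        rw [dif_pos (show ((⟨(i : ℕ), by omega⟩ : Fin (n1 + n2)) : ℕ) < n1 from i.isLt)]
          at h
        rwa [show (⟨((⟨(i : ℕ), by omega⟩ : Fin (n1 + n2)) : ℕ), i.isLt⟩ : Fin n1) = i
          from Fin.ext rfl] at h
      · intro i
        have h := hBm ⟨n1 + (i : ℕ), by omega⟩
        dsimp only at h
        rw [dif_neg (show ¬ n1 + (i : ℕ) < n1 by omega)] at h
        rwa [show (⟨n1 + (i : ℕ) - n1, show n1 + (i : ℕ) - n1 < n2 by omega⟩ :
          Fin n2) = i from Fin.ext (show n1 + (i : ℕ) - n1 = (i : ℕ) by omega)] at h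
  | sUnion S hS ih =>
    intro hA
    obtain ⟨s, hsS, hAs⟩ := hA
    obtain ⟨W, n, Ws, h1, h2, h3, h4, h5⟩ := ih s hsS hAs
    exact ⟨W, n, Ws, h1, h2, h3, h4, fun B hB1 hB2 => ⟨s, hsS, h5 B hB1 hB2⟩⟩

end Vietoris

section TClosed
variable {X K : Type*} [LinearOrder X] [Infinite X]
  [CompleteLinearOrder K] [TopologicalSpace K] [OrderTopology K]

lemma Tset_closed (hX : UltrahomogeneousOrder X) (e : X ↪o K)
    (hdense : ∀ k : K, k = sSup ((fun x : X => e x) '' {x : X | e x ≤ k}) ∧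
                       k = sInf ((fun x : X => e x) '' {x : X | k ≤ e x})) :
    @IsClosed _ (vietorisTop (K × K))
      {A : HClosed (K × K) |
        (∀ p ∈ (A : Set (K × K)), ∀ q ∈ (A : Set (K × K)),
          (p.1 ≤ q.1 ∧ p.2 ≤ q.2) ∨ (q.1 ≤ p.1 ∧ q.2 ≤ p.2)) ∧
        IsConnected (A : Set (K × K)) ∧
        Prod.fst '' (A : Set (K × K)) = Set.univ ∧
        Prod.snd '' (A : Set (K × K)) = Set.univ} := by
  letI : TopologicalSpace (HClosed (K × K)) := vietorisTop (K × K)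
  rw [← isOpen_compl_iff, isOpen_iff_forall_mem_open]
  intro A hA
  by_cases hch : ∀ p ∈ (A : Set (K × K)), ∀ q ∈ (A : Set (K × K)),
      (p.1 ≤ q.1 ∧ p.2 ≤ q.2) ∨ (q.1 ≤ p.1 ∧ q.2 ≤ p.2)
  swap
  · -- not a chain
    push_neg at hch
    obtain ⟨p, hp, q, hq, hn1, hn2⟩ := hch
    have hcross : ∃ a ∈ (A : Set (K × K)), ∃ b ∈ (A : Set (K × K)),
        a.1 < b.1 ∧ b.2 < a.2 := by
      rcases le_total p.1 q.1 with h | h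
      · have h2 : q.2 < p.2 := hn1 h
        have h1 : p.1 < q.1 := not_le.1 (fun hle => lt_asymm h2 (hn2 hle))
        exact ⟨p, hp, q, hq, h1, h2⟩
      · have h2 : p.2 < q.2 := hn2 h
        have h1 : q.1 < p.1 := not_le.1 (fun hle => lt_asymm h2 (hn1 hle))
        exact ⟨q, hq, p, hp, h1, h2⟩
    obtain ⟨a, haA, b, hbA, hab1, hab2⟩ := hcross
    obtain ⟨r, hr1, hr2⟩ := K_dense e hdense hX hab1
    obtain ⟨s, hs1, hs2⟩ := K_dense e hdense hX hab2
    set O1 : Set (K × K) := Prod.fst ⁻¹' Set.Iio r ∩ Prod.snd ⁻¹' Set.Ioi s with hO1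
    set O2 : Set (K × K) := Prod.fst ⁻¹' Set.Ioi r ∩ Prod.snd ⁻¹' Set.Iio s with hO2
    refine ⟨{B : HClosed (K × K) | ((B : Set (K × K)) ∩ O1).Nonempty} ∩
      {B : HClosed (K × K) | ((B : Set (K × K)) ∩ O2).Nonempty}, ?_, ?_, ?_, ?_⟩
    · rintro B ⟨⟨a', ha'B, ha'1, ha'2⟩, ⟨b', hb'B, hb'1, hb'2⟩⟩
      intro hBch
      rcases hBch.1 a' ha'B b' hb'B with h | h
      · exact absurd (lt_trans (lt_of_lt_of_le ha'2 h.2) hb'2) (lt_irrefl s)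
      · exact absurd (lt_trans (lt_of_lt_of_le hb'1 h.1) ha'1) (lt_irrefl r)
    · exact (viet_open_meets O1 ((isOpen_Iio.preimage continuous_fst).inter
        (isOpen_Ioi.preimage continuous_snd))).inter
        (viet_open_meets O2 ((isOpen_Ioi.preimage continuous_fst).inter
        (isOpen_Iio.preimage continuous_snd)))
    · exact ⟨a, haA, hr1, hs2⟩
    · exact ⟨b, hbA, hr2, hs1⟩
  by_cases hf : Prod.fst '' (A : Set (K × K)) = Set.univ
  swap
  · -- first projection not full
    obtain ⟨k, hk⟩ := Set.ne_univ_iff_exists_notMem _ |>.1 hf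
    have hcomp : IsCompact (Prod.fst '' (A : Set (K × K))) :=
      (A.2.isCompact).image continuous_fst
    have hdisj : Disjoint {k} (Prod.fst '' (A : Set (K × K))) := by
      rw [Set.disjoint_left]
      rintro w rfl
      exact hk
    obtain ⟨U, V, hUo, hVo, hkU, hAV, hUV⟩ :=
      SeparatedNhds.of_isCompact_isCompact isCompact_singleton hcomp hdisj
    refine ⟨{B : HClosed (K × K) | (B : Set (K × K)) ⊆ Prod.fst ⁻¹' V}, ?_, ?_, ?_⟩
    · intro B hB hBT
      have hkim : k ∈ Prod.fst '' (B : Set (K × K)) := hBT.2.2.1.symm ▸ Set.mem_univ k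
      obtain ⟨w, hwB, hwk⟩ := hkim
      exact Set.disjoint_left.1 hUV (hkU rfl) (hwk ▸ hB hwB)
    · exact viet_open_sub _ (hVo.preimage continuous_fst)
    · intro w hw
      exact hAV ⟨w, hw, rfl⟩
  by_cases hs : Prod.snd '' (A : Set (K × K)) = Set.univ
  swap
  · -- second projection not full
    obtain ⟨k, hk⟩ := Set.ne_univ_iff_exists_notMem _ |>.1 hs
    have hcomp : IsCompact (Prod.snd '' (A : Set (K × K))) :=
      (A.2.isCompact).image continuous_snd
    have hdisj : Disjoint {k} (Prod.snd '' (A : Set (K × K))) := by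
      rw [Set.disjoint_left]
      rintro w rfl
      exact hk
    obtain ⟨U, V, hUo, hVo, hkU, hAV, hUV⟩ :=
      SeparatedNhds.of_isCompact_isCompact isCompact_singleton hcomp hdisj
    refine ⟨{B : HClosed (K × K) | (B : Set (K × K)) ⊆ Prod.snd ⁻¹' V}, ?_, ?_, ?_⟩
    · intro B hB hBT
      have hkim : k ∈ Prod.snd '' (B : Set (K × K)) := hBT.2.2.2.symm ▸ Set.mem_univ k
      obtain ⟨w, hwB, hwk⟩ := hkim
      exact Set.disjoint_left.1 hUV (hkU rfl) (hwk ▸ hB hwB)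
    · exact viet_open_sub _ (hVo.preimage continuous_snd)
    · intro w hw
      exact hAV ⟨w, hw, rfl⟩
  -- A is a chain with full projections, so it must fail to be connected
  have hnA : (A : Set (K × K)).Nonempty := by
    have h1 : (⊥ : K) ∈ Prod.fst '' (A : Set (K × K)) := hf.symm ▸ Set.mem_univ _
    obtain ⟨a, haA, _⟩ := h1
    exact ⟨a, haA⟩
  have hnpc : ¬IsPreconnected (A : Set (K × K)) := by
    intro h
    exact hA ⟨hch, ⟨hnA, h⟩, hf, hs⟩
  rw [IsPreconnected] at hnpc
  push_neg at hnpc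
  obtain ⟨U, V, hUo, hVo, hcov, hne1, hne2, hUVe⟩ := hnpc
  have hUV' : (A : Set (K × K)) ∩ (U ∩ V) = ∅ := hUVe
  set C : Set (K × K) := (A : Set (K × K)) ∩ Vᶜ with hC
  set Dd : Set (K × K) := (A : Set (K × K)) ∩ Uᶜ with hDd
  have hCcomp : IsCompact C := (A.2.inter hVo.isClosed_compl).isCompact
  have hDcomp : IsCompact Dd := (A.2.inter hUo.isClosed_compl).isCompact
  have hCD : Disjoint C Dd := by
    rw [Set.disjoint_left]
    rintro w ⟨hwA, hwV⟩ ⟨_, hwU⟩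
    rcases hcov hwA with h | h
    · exact hwU h
    · exact hwV h
  have hCne : C.Nonempty := by
    obtain ⟨w, hwA, hwU⟩ := hne1
    refine ⟨w, hwA, fun hwV => ?_⟩
    have : w ∈ (A : Set (K × K)) ∩ (U ∩ V) := ⟨hwA, hwU, hwV⟩
    rw [hUV'] at this
    exact this
  have hDne : Dd.Nonempty := by
    obtain ⟨w, hwA, hwV⟩ := hne2
    refine ⟨w, hwA, fun hwU => ?_⟩
    have : w ∈ (A : Set (K × K)) ∩ (U ∩ V) := ⟨hwA, hwU, hwV⟩
    rw [hUV'] at this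
    exact this
  have hAcd : (A : Set (K × K)) ⊆ C ∪ Dd := by
    intro w hwA
    by_cases h : w ∈ V
    · refine Or.inr ⟨hwA, fun hwU => ?_⟩
      have : w ∈ (A : Set (K × K)) ∩ (U ∩ V) := ⟨hwA, hwU, h⟩
      rw [hUV'] at this
      exact this
    · exact Or.inl ⟨hwA, h⟩
  obtain ⟨O1, O2, hO1o, hO2o, hCO1, hDO2, hO12⟩ :=
    SeparatedNhds.of_isCompact_isCompact hCcomp hDcomp hCD
  refine ⟨{B : HClosed (K × K) | (B : Set (K × K)) ⊆ O1 ∪ O2} ∩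
    ({B : HClosed (K × K) | ((B : Set (K × K)) ∩ O1).Nonempty} ∩
     {B : HClosed (K × K) | ((B : Set (K × K)) ∩ O2).Nonempty}), ?_, ?_, ?_, ?_, ?_⟩
  · rintro B ⟨hBsub, hBm1, hBm2⟩ hBT
    have hBpc := hBT.2.1.isPreconnected
    have := hBpc O1 O2 hO1o hO2o hBsub hBm1 hBm2
    obtain ⟨w, _, hw1, hw2⟩ := this
    exact Set.disjoint_left.1 hO12 hw1 hw2
  · exact (viet_open_sub _ (hO1o.union hO2o)).inter
      ((viet_open_meets _ hO1o).inter (viet_open_meets _ hO2o))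
  · exact fun w hw => Set.union_subset_union hCO1 hDO2 (hAcd hw)
  · obtain ⟨w, hw⟩ := hCne
    exact ⟨w, hw.1, hCO1 hw⟩
  · obtain ⟨w, hw⟩ := hDne
    exact ⟨w, hw.1, hDO2 hw⟩

end TClosed


/-- Description of the graph compactification of `Aut(X)` for an infinite ultrahomogeneous
LOTS `X`: for `K` the least linearly ordered compactification of `X` (a complete linear order
with the order topology in which `X` is sup- and inf-dense), every `ĝ(k) = sup{g(x) : x ≤ k}`
is an order-automorphism and homeomorphism of `K` extending `g`, and the closure of the graphs
`{Γ(ĝ) : g ∈ Aut(X)}` in the Vietoris hyperspace of `K × K` consists exactly of the closed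
subsets of `K × K` that are linearly ordered by the coordinatewise order, connected, and have
full projections. -/
theorem stmt_18 {X K : Type*} [LinearOrder X] [Infinite X]
    (hX : UltrahomogeneousOrder X)
    [CompleteLinearOrder K] [TopologicalSpace K] [OrderTopology K]
    (e : X ↪o K)
    (hdense : ∀ k : K, k = sSup ((fun x : X => e x) '' {x : X | e x ≤ k}) ∧
                       k = sInf ((fun x : X => e x) '' {x : X | k ≤ e x}))
    (hatf : (X ≃o X) → K → K)
    (hhat : ∀ (g : X ≃o X) (k : K),
      hatf g k = sSup ((fun x : X => e (g x)) '' {x : X | e x ≤ k})) :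
    (∀ g : X ≃o X,
      (∃ Gk : K ≃o K, ∀ k : K, Gk k = hatf g k) ∧
      (∃ Φ : K ≃ₜ K, ∀ k : K, Φ k = hatf g k) ∧
      (∀ x : X, hatf g (e x) = e (g x))) ∧
    @closure _ (vietorisTop (K × K))
        {A : HClosed (K × K) | ∃ g : X ≃o X,
          (A : Set (K × K)) = {p : K × K | p.2 = hatf g p.1}} =
      {A : HClosed (K × K) |
        (∀ p ∈ (A : Set (K × K)), ∀ q ∈ (A : Set (K × K)),
          (p.1 ≤ q.1 ∧ p.2 ≤ q.2) ∨ (q.1 ≤ p.1 ∧ q.2 ≤ p.2)) ∧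
        IsConnected (A : Set (K × K)) ∧
        Prod.fst '' (A : Set (K × K)) = Set.univ ∧
        Prod.snd '' (A : Set (K × K)) = Set.univ} := by
  constructor
  · intro g
    obtain ⟨Gk, hGk⟩ := hat_orderIso e hdense hatf hhat g
    exact ⟨⟨Gk, hGk⟩, ⟨Gk.toHomeomorph, hGk⟩, fun x => hat_e e hdense hatf hhat g x⟩
  · letI : TopologicalSpace (HClosed (K × K)) := vietorisTop (K × K)
    apply Set.Subset.antisymm
    · refine closure_minimal ?_ (Tset_closed hX e hdense)
      rintro A ⟨g, hg⟩
      obtain ⟨_, hch, hco, hf1, hs1⟩ := graph_props hX e hdense hatf hhat g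
      refine ⟨?_, ?_, ?_, ?_⟩ <;> rw [hg]
      · exact hch
      · exact hco
      · exact hf1
      · exact hs1
    · rintro A ⟨hch, hco, hf1, hs1⟩
      rw [mem_closure_iff]
      intro U hU hAU
      obtain ⟨W, n, Ws, hWo, hAW, hWso, hWsm, hUB⟩ := standard_nbhd hU hAU
      obtain ⟨g, hgW, hgm⟩ := main_approx hX e hdense hatf hhat (A : Set (K × K)) A.2
        (fun p hp q hq => hch p hp q hq) hco.isPreconnected hf1 hs1 W hWo hAW Ws hWso hWsm
      exact ⟨⟨{p : K × K | p.2 = hatf g p.1}, (graph_props hX e hdense hatf hhat g).1⟩,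
        hUB _ hgW hgm, g, rfl⟩
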